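/- arXiv:2603.26428 — 9 statements merged into one kernel-verified Lean document; each statement's English description precedes it below -/
import Mathlib

section
/- Let X and Y be nonempty metric spaces, R a correspondence between X and Y, and for ε > 0 let R_ε = U_ε(R) be the open ε-neighborhood of R in the product metric space X × Y (with, e.g., the max product metric). Then dis R = inf_{ε>0} dis R_ε. -/
open Metric Set
open scoped ENNReal

/-- Distortion of a relation `σ ⊆ X × Y`, valued in `[0,∞]`. -/
noncomputable def dis {X Y : Type*} [MetricSpace X] [MetricSpace Y]
    (σ : Set (X × Y)) : ℝ≥0∞ :=
  ⨆ (p ∈ σ) (q ∈ σ), ENNReal.ofReal |dist p.1 q.1 - dist p.2 q.2|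

/-- A correspondence is a relation whose projections to both factors are surjective. -/
def IsCorrespondence {X Y : Type*} (R : Set (X × Y)) : Prop :=
  (∀ x, ∃ y, (x, y) ∈ R) ∧ (∀ y, ∃ x, (x, y) ∈ R)

/-- The set-valued map `X ⇉ Y` determined by a relation `R ⊆ X × Y`. -/
def corrMap {X Y : Type*} (R : Set (X × Y)) : X → Set Y := fun x => {y | (x, y) ∈ R}

/-- The inverse set-valued map `Y ⇉ X` determined by a relation `R ⊆ X × Y`. -/
def corrInv {X Y : Type*} (R : Set (X × Y)) : Y → Set X := fun y => {x | (x, y) ∈ R}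

/-- Upper semicontinuity of a set-valued map. -/
def SVUpperSemicontinuous {X Y : Type*} [TopologicalSpace X] [TopologicalSpace Y]
    (f : X → Set Y) : Prop :=
  ∀ x : X, ∀ U : Set Y, IsOpen U → f x ⊆ U →
    ∃ V : Set X, IsOpen V ∧ x ∈ V ∧ ∀ x' ∈ V, f x' ⊆ U

/-- Lower semicontinuity of a set-valued map. -/
def SVLowerSemicontinuous {X Y : Type*} [TopologicalSpace X] [TopologicalSpace Y]
    (f : X → Set Y) : Prop :=
  ∀ x : X, ∀ U : Set Y, IsOpen U → (f x ∩ U).Nonempty →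
    ∃ V : Set X, IsOpen V ∧ x ∈ V ∧ ∀ x' ∈ V, (f x' ∩ U).Nonempty

/-- The Gromov–Hausdorff distance defined via distortion of correspondences. -/
noncomputable def dGH (X Y : Type*) [MetricSpace X] [MetricSpace Y] : ℝ≥0∞ :=
  2⁻¹ * ⨅ (R : Set (X × Y)) (_ : IsCorrespondence R), dis R

/-- The upper semicontinuous Gromov–Hausdorff distance. -/
noncomputable def dGHus (X Y : Type*) [MetricSpace X] [MetricSpace Y] : ℝ≥0∞ :=
  2⁻¹ * ⨅ (R : Set (X × Y))
    (_ : IsCorrespondence R ∧ SVUpperSemicontinuous (corrMap R) ∧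
      SVUpperSemicontinuous (corrInv R)), dis R

/-- The lower semicontinuous Gromov–Hausdorff distance. -/
noncomputable def dGHls (X Y : Type*) [MetricSpace X] [MetricSpace Y] : ℝ≥0∞ :=
  2⁻¹ * ⨅ (R : Set (X × Y))
    (_ : IsCorrespondence R ∧ SVLowerSemicontinuous (corrMap R) ∧
      SVLowerSemicontinuous (corrInv R)), dis R

lemma dis_mono' {X Y : Type*} [MetricSpace X] [MetricSpace Y]
    {σ τ : Set (X × Y)} (h : σ ⊆ τ) : dis σ ≤ dis τ := by
  simp only [dis]
  refine iSup₂_le fun p hp => iSup₂_le fun q hq => ?_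
  exact le_iSup₂_of_le p (h hp) (le_iSup₂_of_le q (h hq) le_rfl)

lemma dis_nbhd_le' {X Y : Type*} [MetricSpace X] [MetricSpace Y]
    (R : Set (X × Y)) {δ : ℝ} (hδ : 0 < δ) :
    dis {p : X × Y | ∃ q ∈ R, dist p q < δ} ≤ dis R + ENNReal.ofReal (4 * δ) := by
  conv_lhs => rw [dis]
  refine iSup₂_le fun p hp => iSup₂_le fun q hq => ?_
  obtain ⟨p', hp', hpd⟩ := hp
  obtain ⟨q', hq', hqd⟩ := hq
  have hpf : dist p.1 p'.1 ≤ dist p p' := by rw [Prod.dist_eq]; exact le_max_left _ _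
  have hps : dist p.2 p'.2 ≤ dist p p' := by rw [Prod.dist_eq]; exact le_max_right _ _
  have hqf : dist q.1 q'.1 ≤ dist q q' := by rw [Prod.dist_eq]; exact le_max_left _ _
  have hqs : dist q.2 q'.2 ≤ dist q q' := by rw [Prod.dist_eq]; exact le_max_right _ _
  have h1 : |dist p.1 q.1 - dist p'.1 q'.1| ≤ 2 * δ := by
    have := dist_dist_dist_le p.1 q.1 p'.1 q'.1
    rw [Real.dist_eq] at this
    linarith
  have h2 : |dist p.2 q.2 - dist p'.2 q'.2| ≤ 2 * δ := by
    have := dist_dist_dist_le p.2 q.2 p'.2 q'.2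
    rw [Real.dist_eq] at this
    linarith
  have key : |dist p.1 q.1 - dist p.2 q.2| ≤ |dist p'.1 q'.1 - dist p'.2 q'.2| + 4 * δ := by
    rw [abs_le] at h1 h2 ⊢
    rcases abs_cases (dist p'.1 q'.1 - dist p'.2 q'.2) with ⟨h, _⟩ | ⟨h, _⟩ <;>
      constructor <;> linarith
  calc ENNReal.ofReal |dist p.1 q.1 - dist p.2 q.2|
      ≤ ENNReal.ofReal (|dist p'.1 q'.1 - dist p'.2 q'.2| + 4 * δ) :=
        ENNReal.ofReal_le_ofReal key
    _ = ENNReal.ofReal |dist p'.1 q'.1 - dist p'.2 q'.2| + ENNReal.ofReal (4 * δ) :=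
        ENNReal.ofReal_add (abs_nonneg _) (by positivity)
    _ ≤ dis R + ENNReal.ofReal (4 * δ) := by
        refine add_le_add ?_ le_rfl
        exact le_iSup₂_of_le p' hp' (le_iSup₂_of_le q' hq' le_rfl)

theorem stmt_4 {X Y : Type*} [MetricSpace X] [MetricSpace Y] [Nonempty X] [Nonempty Y]
    (R : Set (X × Y)) (hR : IsCorrespondence R) :
    dis R = ⨅ (ε : ℝ) (_ : 0 < ε), dis {p : X × Y | ∃ q ∈ R, dist p q < ε} := by
  refine le_antisymm (le_iInf₂ fun ε hε => dis_mono' fun p hp => ⟨p, hp, by simpa using hε⟩) ?_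
  refine ENNReal.le_of_forall_pos_le_add fun ε hε _ => ?_
  have hδ : (0 : ℝ) < ε / 4 := by positivity
  calc (⨅ (ε : ℝ) (_ : 0 < ε), dis {p : X × Y | ∃ q ∈ R, dist p q < ε})
      ≤ dis {p : X × Y | ∃ q ∈ R, dist p q < ε / 4} := iInf₂_le _ hδ
    _ ≤ dis R + ENNReal.ofReal (4 * (ε / 4)) := dis_nbhd_le' R hδ
    _ = dis R + ε := by
        rw [show (4 : ℝ) * ((ε : ℝ) / 4) = (ε : ℝ) by ring, ENNReal.ofReal_coe_nnreal]
end

section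
/- For any nonempty metric spaces X, Y, Z, the upper semicontinuous Gromov–Hausdorff distance satisfies the triangle inequality: d^{us}_GH(X,Z) ≤ d^{us}_GH(X,Y) + d^{us}_GH(Y,Z). -/
open Metric Set
open scoped ENNReal

/-- Composition of two relations. -/
def relComp {X Y Z : Type*} (R₁ : Set (X × Y)) (R₂ : Set (Y × Z)) : Set (X × Z) :=
  {p | ∃ y, (p.1, y) ∈ R₁ ∧ (y, p.2) ∈ R₂}

lemma relComp_isCorrespondence {X Y Z : Type*} {R₁ : Set (X × Y)} {R₂ : Set (Y × Z)}
    (h₁ : IsCorrespondence R₁) (h₂ : IsCorrespondence R₂) :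
    IsCorrespondence (relComp R₁ R₂) := by
  constructor
  · intro x
    obtain ⟨y, hy⟩ := h₁.1 x
    obtain ⟨z, hz⟩ := h₂.1 y
    exact ⟨z, y, hy, hz⟩
  · intro z
    obtain ⟨y, hy⟩ := h₂.2 z
    obtain ⟨x, hx⟩ := h₁.2 y
    exact ⟨x, y, hx, hy⟩

/-- Composition of upper semicontinuous set-valued maps is upper semicontinuous. -/
lemma svusc_comp {A B C : Type*} [TopologicalSpace A] [TopologicalSpace B] [TopologicalSpace C]
    {f : A → Set B} {g : B → Set C}
    (hf : SVUpperSemicontinuous f) (hg : SVUpperSemicontinuous g) :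
    SVUpperSemicontinuous (fun a => ⋃ b ∈ f a, g b) := by
  intro a U hU hsub
  set W : Set B := ⋃₀ {V | IsOpen V ∧ ∀ b ∈ V, g b ⊆ U} with hW
  have hWopen : IsOpen W := isOpen_sUnion fun V hV => hV.1
  have hfW : f a ⊆ W := by
    intro b hb
    have hgb : g b ⊆ U := by
      intro c hc
      exact hsub (mem_biUnion hb hc)
    obtain ⟨V, hVopen, hbV, hV⟩ := hg b U hU hgb
    exact ⟨V, ⟨hVopen, hV⟩, hbV⟩
  obtain ⟨V, hVopen, haV, hV⟩ := hf a W hWopen hfW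
  refine ⟨V, hVopen, haV, fun a' ha' => ?_⟩
  intro c hc
  obtain ⟨b, hb, hcb⟩ := mem_iUnion₂.1 hc
  obtain ⟨V', ⟨_, hV'⟩, hbV'⟩ := hV a' ha' hb
  exact hV' b hbV' hcb

lemma corrMap_relComp {X Y Z : Type*} (R₁ : Set (X × Y)) (R₂ : Set (Y × Z)) :
    corrMap (relComp R₁ R₂) = fun x => ⋃ y ∈ corrMap R₁ x, corrMap R₂ y := by
  funext x
  ext z
  simp only [corrMap, relComp, mem_iUnion₂, mem_setOf_eq]
  exact ⟨fun ⟨y, h1, h2⟩ => ⟨y, h1, h2⟩, fun ⟨y, h1, h2⟩ => ⟨y, h1, h2⟩⟩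

lemma corrInv_relComp {X Y Z : Type*} (R₁ : Set (X × Y)) (R₂ : Set (Y × Z)) :
    corrInv (relComp R₁ R₂) = fun z => ⋃ y ∈ corrInv R₂ z, corrInv R₁ y := by
  funext z
  ext x
  simp only [corrInv, relComp, mem_iUnion₂, mem_setOf_eq]
  exact ⟨fun ⟨y, h1, h2⟩ => ⟨y, h2, h1⟩, fun ⟨y, h1, h2⟩ => ⟨y, h2, h1⟩⟩

lemma dis_relComp_le {X Y Z : Type*} [MetricSpace X] [MetricSpace Y] [MetricSpace Z]
    (R₁ : Set (X × Y)) (R₂ : Set (Y × Z)) :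
    dis (relComp R₁ R₂) ≤ dis R₁ + dis R₂ := by
  refine iSup₂_le fun p hp => iSup₂_le fun q hq => ?_
  obtain ⟨b, hb1, hb2⟩ := hp
  obtain ⟨b', hb1', hb2'⟩ := hq
  have habs : |dist p.1 q.1 - dist p.2 q.2| ≤
      |dist p.1 q.1 - dist b b'| + |dist b b' - dist p.2 q.2| := abs_sub_le _ _ _
  calc ENNReal.ofReal |dist p.1 q.1 - dist p.2 q.2|
      ≤ ENNReal.ofReal (|dist p.1 q.1 - dist b b'| + |dist b b' - dist p.2 q.2|) :=
        ENNReal.ofReal_le_ofReal habs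
    _ ≤ ENNReal.ofReal |dist p.1 q.1 - dist b b'|
        + ENNReal.ofReal |dist b b' - dist p.2 q.2| := ENNReal.ofReal_add_le
    _ ≤ dis R₁ + dis R₂ := by
        gcongr
        · exact le_iSup₂_of_le (p.1, b) hb1 (le_iSup₂_of_le (q.1, b') hb1' le_rfl)
        · exact le_iSup₂_of_le (b, p.2) hb2 (le_iSup₂_of_le (b', q.2) hb2' le_rfl)

theorem stmt_8 {X Y Z : Type*} [MetricSpace X] [MetricSpace Y] [MetricSpace Z]
    [Nonempty X] [Nonempty Y] [Nonempty Z] :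
    dGHus X Z ≤ dGHus X Y + dGHus Y Z := by
  rw [dGHus, dGHus, dGHus, ← mul_add]
  refine mul_le_mul_right ?_ _
  rw [ENNReal.iInf_add]
  refine le_iInf fun R₁ => ?_
  rw [ENNReal.iInf_add]
  refine le_iInf fun hR₁ => ?_
  rw [ENNReal.add_iInf]
  refine le_iInf fun R₂ => ?_
  rw [ENNReal.add_iInf]
  refine le_iInf fun hR₂ => ?_
  refine le_trans (iInf₂_le (relComp R₁ R₂) ?_) (dis_relComp_le R₁ R₂)
  refine ⟨relComp_isCorrespondence hR₁.1 hR₂.1, ?_, ?_⟩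
  · rw [corrMap_relComp]
    exact svusc_comp hR₁.2.1 hR₂.2.1
  · rw [corrInv_relComp]
    exact svusc_comp hR₂.2.2 hR₁.2.2
end

section
/- For any nonempty metric spaces X, Y, Z, the lower semicontinuous Gromov–Hausdorff distance satisfies the triangle inequality: d^{ls}_GH(X,Z) ≤ d^{ls}_GH(X,Y) + d^{ls}_GH(Y,Z). -/
open Metric Set
open scoped ENNReal

/-- Composition of relations. -/
def rcomp {X Y Z : Type*} (R : Set (X × Y)) (S : Set (Y × Z)) : Set (X × Z) :=
  {p | ∃ y, (p.1, y) ∈ R ∧ (y, p.2) ∈ S}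

lemma le_dis {X Y : Type*} [MetricSpace X] [MetricSpace Y] {σ : Set (X × Y)} {p q : X × Y}
    (hp : p ∈ σ) (hq : q ∈ σ) :
    ENNReal.ofReal |dist p.1 q.1 - dist p.2 q.2| ≤ dis σ := by
  unfold dis
  refine le_trans ?_
    (le_iSup₂ (f := fun p (_ : p ∈ σ) =>
      ⨆ q ∈ σ, ENNReal.ofReal |dist p.1 q.1 - dist p.2 q.2|) p hp)
  exact le_iSup₂ (f := fun q (_ : q ∈ σ) =>
    ENNReal.ofReal |dist p.1 q.1 - dist p.2 q.2|) q hq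

lemma dis_rcomp {X Y Z : Type*} [MetricSpace X] [MetricSpace Y] [MetricSpace Z]
    (R : Set (X × Y)) (S : Set (Y × Z)) :
    dis (rcomp R S) ≤ dis R + dis S := by
  refine iSup₂_le fun p hp => iSup₂_le fun q hq => ?_
  obtain ⟨y, hy1, hy2⟩ := hp
  obtain ⟨y', hy1', hy2'⟩ := hq
  have h1 : ENNReal.ofReal |dist p.1 q.1 - dist y y'| ≤ dis R :=
    le_dis (p := (p.1, y)) (q := (q.1, y')) hy1 hy1'
  have h2 : ENNReal.ofReal |dist y y' - dist p.2 q.2| ≤ dis S :=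
    le_dis (p := (y, p.2)) (q := (y', q.2)) hy2 hy2'
  calc ENNReal.ofReal |dist p.1 q.1 - dist p.2 q.2|
      ≤ ENNReal.ofReal (|dist p.1 q.1 - dist y y'| + |dist y y' - dist p.2 q.2|) :=
        ENNReal.ofReal_le_ofReal (abs_sub_le _ _ _)
    _ ≤ dis R + dis S := by
        rw [ENNReal.ofReal_add (abs_nonneg _) (abs_nonneg _)]
        exact add_le_add h1 h2

lemma isCorrespondence_rcomp {X Y Z : Type*} {R : Set (X × Y)} {S : Set (Y × Z)}
    (hR : IsCorrespondence R) (hS : IsCorrespondence S) :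
    IsCorrespondence (rcomp R S) := by
  constructor
  · intro x
    obtain ⟨y, hy⟩ := hR.1 x
    obtain ⟨z, hz⟩ := hS.1 y
    exact ⟨z, y, hy, hz⟩
  · intro z
    obtain ⟨y, hy⟩ := hS.2 z
    obtain ⟨x, hx⟩ := hR.2 y
    exact ⟨x, y, hx, hy⟩

lemma svlsc_comp {X Y Z : Type*} [TopologicalSpace X] [TopologicalSpace Y] [TopologicalSpace Z]
    {f : X → Set Y} {g : Y → Set Z}
    (hf : SVLowerSemicontinuous f) (hg : SVLowerSemicontinuous g)
    (h : X → Set Z) (hh : ∀ x, h x = {z | ∃ y ∈ f x, z ∈ g y}) :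
    SVLowerSemicontinuous h := by
  intro x U hU hne
  obtain ⟨z, hz, hzU⟩ := hne
  rw [hh] at hz
  obtain ⟨y, hyf, hzg⟩ := hz
  obtain ⟨W, hWo, hyW, hW⟩ := hg y U hU ⟨z, hzg, hzU⟩
  obtain ⟨V, hVo, hxV, hV⟩ := hf x W hWo ⟨y, hyf, hyW⟩
  refine ⟨V, hVo, hxV, fun x' hx' => ?_⟩
  obtain ⟨y', hy'f, hy'W⟩ := hV x' hx'
  obtain ⟨z', hz'g, hz'U⟩ := hW y' hy'W
  exact ⟨z', by rw [hh]; exact ⟨y', hy'f, hz'g⟩, hz'U⟩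

lemma lsc_corrMap_rcomp {X Y Z : Type*} [TopologicalSpace X] [TopologicalSpace Y]
    [TopologicalSpace Z] {R : Set (X × Y)} {S : Set (Y × Z)}
    (hR : SVLowerSemicontinuous (corrMap R)) (hS : SVLowerSemicontinuous (corrMap S)) :
    SVLowerSemicontinuous (corrMap (rcomp R S)) := by
  refine svlsc_comp hR hS _ fun x => ?_
  ext z
  exact ⟨fun ⟨y, h1, h2⟩ => ⟨y, h1, h2⟩, fun ⟨y, h1, h2⟩ => ⟨y, h1, h2⟩⟩

lemma lsc_corrInv_rcomp {X Y Z : Type*} [TopologicalSpace X] [TopologicalSpace Y]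
    [TopologicalSpace Z] {R : Set (X × Y)} {S : Set (Y × Z)}
    (hR : SVLowerSemicontinuous (corrInv R)) (hS : SVLowerSemicontinuous (corrInv S)) :
    SVLowerSemicontinuous (corrInv (rcomp R S)) := by
  refine svlsc_comp hS hR _ fun z => ?_
  ext x
  exact ⟨fun ⟨y, h1, h2⟩ => ⟨y, h2, h1⟩, fun ⟨y, h1, h2⟩ => ⟨y, h2, h1⟩⟩

theorem stmt_9 {X Y Z : Type*} [MetricSpace X] [MetricSpace Y] [MetricSpace Z]
    [Nonempty X] [Nonempty Y] [Nonempty Z] :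
    dGHls X Z ≤ dGHls X Y + dGHls Y Z := by
  rw [dGHls, dGHls, dGHls, ← mul_add]
  refine mul_le_mul_right ?_ _
  set PXY : Set (X × Y) → Prop := fun R =>
    IsCorrespondence R ∧ SVLowerSemicontinuous (corrMap R) ∧
      SVLowerSemicontinuous (corrInv R) with hPXY
  set PYZ : Set (Y × Z) → Prop := fun S =>
    IsCorrespondence S ∧ SVLowerSemicontinuous (corrMap S) ∧
      SVLowerSemicontinuous (corrInv S) with hPYZ
  have key : ∀ (R : Subtype PXY) (S : Subtype PYZ),
      (⨅ (T : Set (X × Z)) (_ : IsCorrespondence T ∧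
          SVLowerSemicontinuous (corrMap T) ∧ SVLowerSemicontinuous (corrInv T)), dis T)
        ≤ dis R.1 + dis S.1 := by
    rintro ⟨R, hR1, hR2, hR3⟩ ⟨S, hS1, hS2, hS3⟩
    refine le_trans (iInf₂_le (rcomp R S) ?_) (dis_rcomp R S)
    exact ⟨isCorrespondence_rcomp hR1 hS1, lsc_corrMap_rcomp hR2 hS2,
      lsc_corrInv_rcomp hR3 hS3⟩
  calc (⨅ (T : Set (X × Z)) (_ : IsCorrespondence T ∧
          SVLowerSemicontinuous (corrMap T) ∧ SVLowerSemicontinuous (corrInv T)), dis T)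
      ≤ ⨅ (R : Subtype PXY) (S : Subtype PYZ), dis R.1 + dis S.1 :=
        le_iInf fun R => le_iInf fun S => key R S
    _ = (⨅ (R : Set (X × Y)) (_ : PXY R), dis R) + ⨅ (S : Set (Y × Z)) (_ : PYZ S), dis S := by
        rw [iInf_subtype', iInf_subtype', ENNReal.iInf_add]
        exact iInf_congr fun R => ENNReal.add_iInf.symm
    _ = _ := rfl
end

section
/- For any nonempty metric spaces X and Y, d_GH(X,Y) = d^{ls}_GH(X,Y); that is, (1/2) inf{ dis R : R a correspondence between X and Y } equals (1/2) inf{ dis R : R a correspondence between X and Y with both R and R⁻¹ lower semicontinuous }. -/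
open Metric Set
open scoped ENNReal

lemma ofReal_le_dis {X Y : Type*} [MetricSpace X] [MetricSpace Y] {R : Set (X × Y)}
    {p q : X × Y} (hp : p ∈ R) (hq : q ∈ R) :
    ENNReal.ofReal |dist p.1 q.1 - dist p.2 q.2| ≤ dis R :=
  le_iSup₂_of_le p hp (le_iSup₂_of_le q hq le_rfl)

lemma lsc_corrMap_of_open {X Y : Type*} [TopologicalSpace X] [TopologicalSpace Y]
    {R : Set (X × Y)} (hR : IsOpen R) : SVLowerSemicontinuous (corrMap R) := by
  intro x U hU ⟨y, hyR, hyU⟩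
  obtain ⟨u, v, hu, hv, hxu, hyv, huv⟩ := isOpen_prod_iff.1 hR x y hyR
  exact ⟨u, hu, hxu, fun x' hx' => ⟨y, huv ⟨hx', hyv⟩, hyU⟩⟩

lemma lsc_corrInv_of_open {X Y : Type*} [TopologicalSpace X] [TopologicalSpace Y]
    {R : Set (X × Y)} (hR : IsOpen R) : SVLowerSemicontinuous (corrInv R) := by
  intro y U hU ⟨x, hxR, hxU⟩
  obtain ⟨u, v, hu, hv, hxu, hyv, huv⟩ := isOpen_prod_iff.1 hR x y hxR
  exact ⟨v, hv, hyv, fun y' hy' => ⟨x, huv ⟨hxu, hy'⟩, hxU⟩⟩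

/-- The open `δ`-thickening of a relation. -/
def thick {X Y : Type*} [MetricSpace X] [MetricSpace Y] (R : Set (X × Y)) (δ : ℝ) :
    Set (X × Y) :=
  {p | ∃ q ∈ R, dist p.1 q.1 < δ ∧ dist p.2 q.2 < δ}

lemma isOpen_thick {X Y : Type*} [MetricSpace X] [MetricSpace Y] (R : Set (X × Y)) (δ : ℝ) :
    IsOpen (thick R δ) := by
  have : thick R δ = ⋃ q ∈ R, ball q.1 δ ×ˢ ball q.2 δ := by
    ext p
    simp [thick, mem_ball, dist_comm, and_comm]
    tauto
  rw [this]
  exact isOpen_biUnion fun q _ => (isOpen_ball).prod isOpen_ball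

lemma subset_thick {X Y : Type*} [MetricSpace X] [MetricSpace Y] (R : Set (X × Y)) {δ : ℝ}
    (hδ : 0 < δ) : R ⊆ thick R δ :=
  fun p hp => ⟨p, hp, by simpa using hδ, by simpa using hδ⟩

lemma dis_thick_le {X Y : Type*} [MetricSpace X] [MetricSpace Y] (R : Set (X × Y)) (δ : ℝ) :
    dis (thick R δ) ≤ dis R + ENNReal.ofReal (4 * δ) := by
  refine iSup₂_le fun p hp => iSup₂_le fun q hq => ?_
  obtain ⟨a, haR, hpa1, hpa2⟩ := hp
  obtain ⟨b, hbR, hqb1, hqb2⟩ := hq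
  have key : |dist p.1 q.1 - dist p.2 q.2| ≤ |dist a.1 b.1 - dist a.2 b.2| + 4 * δ := by
    have h1 : |dist p.1 q.1 - dist a.1 b.1| ≤ dist p.1 a.1 + dist q.1 b.1 := by
      have := abs_dist_sub_le p.1 q.1 a.1
      have := abs_dist_sub_le q.1 b.1 a.1
      have h := dist_dist_dist_le p.1 q.1 a.1 b.1
      rwa [Real.dist_eq] at h
    have h2 : |dist p.2 q.2 - dist a.2 b.2| ≤ dist p.2 a.2 + dist q.2 b.2 := by
      have h := dist_dist_dist_le p.2 q.2 a.2 b.2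
      rwa [Real.dist_eq] at h
    have := abs_sub_abs_le_abs_sub (dist p.1 q.1 - dist p.2 q.2)
      (dist a.1 b.1 - dist a.2 b.2)
    calc |dist p.1 q.1 - dist p.2 q.2|
        ≤ |dist a.1 b.1 - dist a.2 b.2| +
          |(dist p.1 q.1 - dist p.2 q.2) - (dist a.1 b.1 - dist a.2 b.2)| := by
          have := abs_sub_abs_le_abs_sub (dist p.1 q.1 - dist p.2 q.2)
            (dist a.1 b.1 - dist a.2 b.2)
          have h := abs_sub (dist p.1 q.1 - dist p.2 q.2) (dist a.1 b.1 - dist a.2 b.2)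
          linarith [abs_sub_le_iff.1 (le_refl |(dist p.1 q.1 - dist p.2 q.2) - (dist a.1 b.1 - dist a.2 b.2)|),
            abs_sub_abs_le_abs_sub (dist p.1 q.1 - dist p.2 q.2) (dist a.1 b.1 - dist a.2 b.2),
            abs_nonneg ((dist p.1 q.1 - dist p.2 q.2) - (dist a.1 b.1 - dist a.2 b.2)),
            le_abs_self (dist p.1 q.1 - dist p.2 q.2 - (dist a.1 b.1 - dist a.2 b.2)),
            neg_abs_le (dist p.1 q.1 - dist p.2 q.2 - (dist a.1 b.1 - dist a.2 b.2)),
            le_abs_self (dist a.1 b.1 - dist a.2 b.2), neg_abs_le (dist a.1 b.1 - dist a.2 b.2)]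
      _ ≤ |dist a.1 b.1 - dist a.2 b.2| + 4 * δ := by
          have h3 : |(dist p.1 q.1 - dist p.2 q.2) - (dist a.1 b.1 - dist a.2 b.2)|
              ≤ |dist p.1 q.1 - dist a.1 b.1| + |dist p.2 q.2 - dist a.2 b.2| := by
            have := abs_sub (dist p.1 q.1 - dist a.1 b.1) (dist a.2 b.2 - dist p.2 q.2)
            rw [abs_sub_comm (dist p.2 q.2)]
            calc |(dist p.1 q.1 - dist p.2 q.2) - (dist a.1 b.1 - dist a.2 b.2)|
                = |(dist p.1 q.1 - dist a.1 b.1) + (dist a.2 b.2 - dist p.2 q.2)| := by ring_nf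
              _ ≤ |dist p.1 q.1 - dist a.1 b.1| + |dist a.2 b.2 - dist p.2 q.2| := abs_add_le _ _
          linarith
  calc ENNReal.ofReal |dist p.1 q.1 - dist p.2 q.2|
      ≤ ENNReal.ofReal (|dist a.1 b.1 - dist a.2 b.2| + 4 * δ) := ENNReal.ofReal_le_ofReal key
    _ ≤ ENNReal.ofReal |dist a.1 b.1 - dist a.2 b.2| + ENNReal.ofReal (4 * δ) :=
        ENNReal.ofReal_add_le
    _ ≤ dis R + ENNReal.ofReal (4 * δ) := add_le_add_left (ofReal_le_dis haR hbR) _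

theorem stmt_13 {X Y : Type*} [MetricSpace X] [MetricSpace Y] [Nonempty X] [Nonempty Y] :
    dGH X Y = dGHls X Y := by
  refine le_antisymm ?_ ?_
  · refine mul_le_mul_right (le_iInf fun R => le_iInf fun h => ?_) _
    exact iInf₂_le R h.1
  · refine mul_le_mul_right (le_iInf fun R => le_iInf fun hR => ?_) _
    refine ENNReal.le_of_forall_pos_le_add fun ε hε _ => ?_
    set δ : ℝ := (ε : ℝ) / 4 with hδdef
    have hδ : 0 < δ := by positivity
    have hcorr : IsCorrespondence (thick R δ) ∧
        SVLowerSemicontinuous (corrMap (thick R δ)) ∧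
        SVLowerSemicontinuous (corrInv (thick R δ)) := by
      refine ⟨⟨fun x => ?_, fun y => ?_⟩,
        lsc_corrMap_of_open (isOpen_thick R δ), lsc_corrInv_of_open (isOpen_thick R δ)⟩
      · obtain ⟨y, hy⟩ := hR.1 x; exact ⟨y, subset_thick R hδ hy⟩
      · obtain ⟨x, hx⟩ := hR.2 y; exact ⟨x, subset_thick R hδ hx⟩
    calc (⨅ (S : Set (X × Y)) (_ : IsCorrespondence S ∧ SVLowerSemicontinuous (corrMap S) ∧
            SVLowerSemicontinuous (corrInv S)), dis S)
        ≤ dis (thick R δ) := iInf₂_le (thick R δ) hcorr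
      _ ≤ dis R + ENNReal.ofReal (4 * δ) := dis_thick_le R δ
      _ = dis R + ε := by
          congr 1
          rw [hδdef]
          have : (4 : ℝ) * ((ε : ℝ) / 4) = (ε : ℝ) := by ring
          rw [this, ENNReal.ofReal_coe_nnreal]
end

section
/- Let X and Y be nonempty compact metric spaces. Then d^{us}_GH(X,Y) = d_GH(X,Y). -/
open Metric Set
open scoped ENNReal

lemma dis_closure' {X Y : Type*} [MetricSpace X] [MetricSpace Y] (σ : Set (X × Y)) :
    dis (closure σ) = dis σ := by
  refine le_antisymm ?_ (dis_mono' subset_closure)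
  refine iSup₂_le fun p hp => iSup₂_le fun q hq => ?_
  have hmem : σ ×ˢ σ ⊆ {r : (X × Y) × (X × Y) |
      ENNReal.ofReal |dist r.1.1 r.2.1 - dist r.1.2 r.2.2| ≤ dis σ} := by
    rintro ⟨a, b⟩ ⟨ha, hb⟩
    show ENNReal.ofReal |dist a.1 b.1 - dist a.2 b.2| ≤ dis σ
    unfold dis
    exact le_iSup₂_of_le a ha (le_iSup₂_of_le b hb le_rfl)
  have hcont : Continuous fun r : (X × Y) × (X × Y) =>
      ENNReal.ofReal |dist r.1.1 r.2.1 - dist r.1.2 r.2.2| := by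
    apply ENNReal.continuous_ofReal.comp
    apply continuous_abs.comp
    exact (continuous_fst.fst.dist continuous_snd.fst).sub
      (continuous_fst.snd.dist continuous_snd.snd)
  have hclosed : IsClosed {r : (X × Y) × (X × Y) |
      ENNReal.ofReal |dist r.1.1 r.2.1 - dist r.1.2 r.2.2| ≤ dis σ} :=
    isClosed_le hcont continuous_const
  have hsub : closure σ ×ˢ closure σ ⊆ {r : (X × Y) × (X × Y) |
      ENNReal.ofReal |dist r.1.1 r.2.1 - dist r.1.2 r.2.2| ≤ dis σ} := by
    rw [← closure_prod_eq]
    exact closure_minimal hmem hclosed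
  exact hsub (mk_mem_prod hp hq)

lemma usc_of_closed' {X Y : Type*} [TopologicalSpace X] [TopologicalSpace Y]
    [CompactSpace Y] {R : Set (X × Y)} (hR : IsClosed R) :
    SVUpperSemicontinuous (corrMap R) := by
  intro x U hU hsub
  have hclosed : IsClosed (Prod.fst '' (R ∩ (univ ×ˢ Uᶜ))) :=
    isClosedMap_fst_of_compactSpace _ (hR.inter (isClosed_univ.prod hU.isClosed_compl))
  refine ⟨(Prod.fst '' (R ∩ (univ ×ˢ Uᶜ)))ᶜ, hclosed.isOpen_compl, ?_, ?_⟩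
  · rintro ⟨⟨a, b⟩, ⟨hab, -, hb⟩, rfl⟩
    exact hb (hsub hab)
  · rintro x' hx' y hy
    by_contra hyU
    exact hx' ⟨(x', y), ⟨hy, mem_univ _, hyU⟩, rfl⟩

theorem stmt_15 {X Y : Type*} [MetricSpace X] [MetricSpace Y]
    [CompactSpace X] [CompactSpace Y] [Nonempty X] [Nonempty Y] :
    dGHus X Y = dGH X Y := by
  unfold dGHus dGH
  congr 1
  refine le_antisymm ?_ ?_
  · refine le_iInf₂ fun R hR => ?_
    have h1 : IsCorrespondence (closure R) :=
      ⟨fun x => (hR.1 x).imp fun y h => subset_closure h,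
       fun y => (hR.2 y).imp fun x h => subset_closure h⟩
    have h2 : SVUpperSemicontinuous (corrMap (closure R)) := usc_of_closed' isClosed_closure
    have h3 : SVUpperSemicontinuous (corrInv (closure R)) := by
      have he : corrInv (closure R) = corrMap (Prod.swap ⁻¹' (closure R)) := rfl
      rw [he]
      exact usc_of_closed' (isClosed_closure.preimage continuous_swap)
    calc ⨅ (S : Set (X × Y)) (_ : IsCorrespondence S ∧ SVUpperSemicontinuous (corrMap S) ∧
          SVUpperSemicontinuous (corrInv S)), dis S
        ≤ dis (closure R) := iInf₂_le (closure R) ⟨h1, h2, h3⟩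
      _ = dis R := dis_closure' R
  · exact le_iInf₂ fun R hR => iInf₂_le R hR.1
end

section
/- Let X be a compact metric space and Y ⊆ X a nonempty subset with the induced metric. Then d^{us}_GH(X,Y) = d_GH(X,Y). -/
open Metric Set
open scoped ENNReal

section Aux
variable {X : Type*} [MetricSpace X] [CompactSpace X]

/-- Key approximation lemma: any correspondence can be replaced by an upper
semicontinuous one with distortion increased by at most `ε`. -/
lemma key_approx (Y : Set X) (hY : Y.Nonempty) (R : Set (X × Y))
    (hR : IsCorrespondence R) (ε : ℝ) (hε : 0 < ε) :
    ∃ R' : Set (X × Y), IsCorrespondence R' ∧ SVUpperSemicontinuous (corrMap R') ∧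
      SVUpperSemicontinuous (corrInv R') ∧ dis R' ≤ dis R + ENNReal.ofReal ε := by
  set δ : ℝ := ε / 6 with hδdef
  have hδ : 0 < δ := by positivity
  obtain ⟨t, -, htfin, htcov⟩ := finite_cover_balls_of_compact (isCompact_univ (X := X)) hδ
  -- the building blocks
  set preA : X → Set Y := fun s => {y | ∃ x₀ : X, dist x₀ s ≤ δ ∧ (x₀, y) ∈ R} with hpreA
  set A : X → Set Y := fun s => closure (preA s) with hA
  set R' : Set (X × Y) := {p | ∃ s ∈ t, dist p.1 s ≤ δ ∧ p.2 ∈ A s} with hR'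
  have hAclosed : ∀ s, IsClosed (A s) := fun s => isClosed_closure
  -- membership in `A s` gives a nearby genuine pair
  have hAmem : ∀ s : X, ∀ y ∈ A s, ∃ y₀ : Y, ∃ x₀ : X,
      dist y y₀ ≤ δ ∧ dist x₀ s ≤ δ ∧ (x₀, y₀) ∈ R := by
    intro s y hy
    rw [hA, Metric.mem_closure_iff] at hy
    obtain ⟨y₀, hy₀, hd⟩ := hy δ hδ
    obtain ⟨x₀, hx₀, hx₀R⟩ := hy₀
    exact ⟨y₀, x₀, hd.le, hx₀, hx₀R⟩
  refine ⟨R', ⟨?_, ?_⟩, ?_, ?_, ?_⟩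
  · -- surjective on X
    intro x
    obtain ⟨s, hs⟩ : ∃ s ∈ t, x ∈ ball s δ := by
      simpa using htcov (mem_univ x)
    obtain ⟨y, hyR⟩ := hR.1 s
    exact ⟨y, s, hs.1, (mem_ball.mp hs.2).le,
      subset_closure ⟨s, by simp [dist_self, hδ.le], hyR⟩⟩
  · -- surjective on Y
    intro y
    obtain ⟨x₀, hx₀⟩ := hR.2 y
    obtain ⟨s, hs⟩ : ∃ s ∈ t, x₀ ∈ ball s δ := by
      simpa using htcov (mem_univ x₀)
    exact ⟨x₀, s, hs.1, (mem_ball.mp hs.2).le,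
      subset_closure ⟨x₀, (mem_ball.mp hs.2).le, hx₀⟩⟩
  · -- corrMap usc
    intro x U hU hxU
    refine ⟨⋂ s ∈ {s ∈ t | δ < dist x s}, {x' | δ < dist x' s}, ?_, ?_, ?_⟩
    · exact (htfin.subset (sep_subset _ _)).isOpen_biInter fun s _ =>
        isOpen_lt continuous_const (continuous_id.dist continuous_const)
    · exact mem_iInter₂.mpr fun s hs => hs.2
    · intro x' hx' y hy
      obtain ⟨s, hst, hds, hyA⟩ := hy
      refine hxU ⟨s, hst, ?_, hyA⟩
      by_contra h
      exact absurd hds (not_le.mpr (mem_iInter₂.mp hx' s ⟨hst, not_le.mp h⟩))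
  · -- corrInv usc
    intro y U hU hyU
    refine ⟨⋂ s ∈ {s ∈ t | y ∉ A s}, (A s)ᶜ, ?_, ?_, ?_⟩
    · exact (htfin.subset (sep_subset _ _)).isOpen_biInter fun s _ =>
        (hAclosed s).isOpen_compl
    · exact mem_iInter₂.mpr fun s hs => hs.2
    · intro y' hy' x hx
      obtain ⟨s, hst, hds, hyA⟩ := hx
      refine hyU ⟨s, hst, hds, ?_⟩
      by_contra h
      exact (mem_iInter₂.mp hy' s ⟨hst, h⟩) hyA
  · -- distortion estimate
    refine iSup₂_le fun p hp => iSup₂_le fun q hq => ?_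
    obtain ⟨s, hst, hds, hpA⟩ := hp
    obtain ⟨s', hst', hds', hqA⟩ := hq
    obtain ⟨y₀, x₀, hyy₀, hx₀s, hR₀⟩ := hAmem s p.2 hpA
    obtain ⟨y₀', x₀', hyy₀', hx₀s', hR₀'⟩ := hAmem s' q.2 hqA
    have hxx₀ : dist p.1 x₀ ≤ 2 * δ := by
      calc dist p.1 x₀ ≤ dist p.1 s + dist x₀ s := dist_triangle_right _ _ _
        _ ≤ 2 * δ := by linarith
    have hxx₀' : dist q.1 x₀' ≤ 2 * δ := by
      calc dist q.1 x₀' ≤ dist q.1 s' + dist x₀' s' := dist_triangle_right _ _ _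
        _ ≤ 2 * δ := by linarith
    have hstep : |dist p.1 q.1 - dist p.2 q.2| ≤ |dist x₀ x₀' - dist y₀ y₀'| + ε := by
      have h1 : |dist p.1 q.1 - dist x₀ x₀'| ≤ dist p.1 x₀ + dist q.1 x₀' := by
        simpa [Real.dist_eq] using dist_dist_dist_le p.1 q.1 x₀ x₀'
      have h2 : |dist p.2 q.2 - dist y₀ y₀'| ≤ dist p.2 y₀ + dist q.2 y₀' := by
        simpa [Real.dist_eq] using dist_dist_dist_le p.2 q.2 y₀ y₀'
      have h3 : |dist p.1 q.1 - dist p.2 q.2| ≤ |dist p.1 q.1 - dist x₀ x₀'| +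
          |dist x₀ x₀' - dist y₀ y₀'| + |dist y₀ y₀' - dist p.2 q.2| := by
        have := abs_sub_le (dist p.1 q.1) (dist x₀ x₀') (dist p.2 q.2)
        have := abs_sub_le (dist x₀ x₀') (dist y₀ y₀') (dist p.2 q.2)
        have := abs_sub_comm (dist y₀ y₀') (dist p.2 q.2)
        linarith
      have hε6 : ε = 6 * δ := by rw [hδdef]; ring
      have := abs_sub_comm (dist y₀ y₀') (dist p.2 q.2)
      linarith
    calc ENNReal.ofReal |dist p.1 q.1 - dist p.2 q.2|
        ≤ ENNReal.ofReal (|dist x₀ x₀' - dist y₀ y₀'| + ε) := ENNReal.ofReal_le_ofReal hstep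
      _ ≤ ENNReal.ofReal |dist x₀ x₀' - dist y₀ y₀'| + ENNReal.ofReal ε :=
          ENNReal.ofReal_add_le
      _ ≤ dis R + ENNReal.ofReal ε := by
          refine add_le_add_left ?_ _
          have := le_iSup₂ (f := fun (q : X × Y) (_ : q ∈ R) =>
            ENNReal.ofReal |dist x₀ q.1 - dist y₀ q.2|) (x₀', y₀') hR₀'
          exact le_trans this (le_iSup₂ (f := fun (p : X × Y) (_ : p ∈ R) =>
            ⨆ (q : X × Y) (_ : q ∈ R), ENNReal.ofReal |dist p.1 q.1 - dist p.2 q.2|)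
            (x₀, y₀) hR₀)

end Aux

theorem stmt_16 {X : Type*} [MetricSpace X] [CompactSpace X]
    (Y : Set X) (hY : Y.Nonempty) :
    dGHus X Y = dGH X Y := by
  refine le_antisymm ?_ ?_
  · -- hard direction
    refine ENNReal.le_of_forall_pos_le_add fun ε hε htop => ?_
    set I := ⨅ (R : Set (X × Y)) (_ : IsCorrespondence R), dis R with hI
    have hIlt : I ≠ ∞ := by
      intro h
      rw [dGH, ← hI, h, ENNReal.mul_top (by norm_num)] at htop
      exact absurd htop (lt_irrefl _)
    have hεpos : (0 : ℝ≥0∞) < (ε : ℝ≥0∞) := by exact_mod_cast hε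
    have hlt : I < I + ε := ENNReal.lt_add_right hIlt hεpos.ne'
    rw [hI] at hlt
    obtain ⟨R, hRlt⟩ := iInf_lt_iff.mp hlt
    obtain ⟨hRc, hRlt⟩ := iInf_lt_iff.mp hRlt
    obtain ⟨R', hc, hu1, hu2, hdis⟩ := key_approx Y hY R hRc ε (by exact_mod_cast hε)
    have h1 : dGHus X Y ≤ 2⁻¹ * dis R' :=
      mul_le_mul_right (iInf₂_le R' ⟨hc, hu1, hu2⟩) _
    have h2 : dis R' ≤ I + ε + ε := by
      refine hdis.trans ?_
      rw [ENNReal.ofReal_coe_nnreal]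
      exact add_le_add_left hRlt.le _
    refine h1.trans ?_
    calc 2⁻¹ * dis R' ≤ 2⁻¹ * (I + (ε + ε)) := by
          refine mul_le_mul_right ?_ _
          rw [← add_assoc]; exact h2
      _ = 2⁻¹ * I + 2⁻¹ * (2 * ε) := by rw [mul_add, two_mul]
      _ = dGH X Y + ε := by
          rw [← mul_assoc, ENNReal.inv_mul_cancel two_ne_zero ENNReal.ofNat_ne_top, one_mul,
            dGH, ← hI]
  · exact mul_le_mul_right (le_iInf fun R => le_iInf fun h => iInf₂_le R h.1) _
end

section
/- Let X be a nonempty compact metric space and Y ⊆ X a dense subset with the induced metric. Then d^{us}_GH(X,Y) = 0. -/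
open Metric Set
open scoped ENNReal

theorem exists_good_corr {X : Type*} [MetricSpace X] [CompactSpace X] [Nonempty X]
    (Y : Set X) (hY : Dense Y) {δ : ℝ} (hδ : 0 < δ) :
    ∃ R : Set (X × Y), (IsCorrespondence R ∧ SVUpperSemicontinuous (corrMap R) ∧
      SVUpperSemicontinuous (corrInv R)) ∧ dis R ≤ ENNReal.ofReal (4 * δ) := by
  obtain ⟨t, ht⟩ : ∃ t : Finset Y, ∀ x : X, ∃ s ∈ t, dist x (s : X) < δ := by
    obtain ⟨t, ht⟩ := isCompact_univ.elim_finite_subcover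
      (fun y : Y => ball (y : X) δ) (fun _ => isOpen_ball)
      (fun x _ => by
        obtain ⟨y, hy, hd⟩ := hY.exists_dist_lt x hδ
        exact mem_iUnion.2 ⟨⟨y, hy⟩, mem_ball.2 hd⟩)
    refine ⟨t, fun x => ?_⟩
    simpa [mem_ball] using ht (mem_univ x)
  have htne : t.Nonempty := by
    obtain ⟨s, hs, _⟩ := ht (Classical.arbitrary X)
    exact ⟨s, hs⟩
  set m : X → ℝ := fun x => t.inf' htne fun s => dist x (s : X) with hm
  set N : X → Set Y := fun x => {s : Y | s ∈ t ∧ dist x (s : X) ≤ m x} with hN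
  have hNmem : ∀ x : X, ∃ s ∈ t, s ∈ N x := by
    intro x
    obtain ⟨s, hst, hse⟩ := t.exists_mem_eq_inf' htne fun s => dist x (s : X)
    exact ⟨s, hst, hst, hse.ge⟩
  have hmlt : ∀ x : X, m x < δ := by
    intro x
    obtain ⟨s, hst, hsd⟩ := ht x
    exact lt_of_le_of_lt (Finset.inf'_le _ hst) hsd
  have hself : ∀ s : Y, s ∈ t → s ∈ N (s : X) := by
    intro s hst
    refine ⟨hst, ?_⟩
    rw [dist_self]
    exact Finset.le_inf' _ _ fun s' _ => dist_nonneg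
  set R : Set (X × Y) := {p | ∃ s : Y, s ∈ N p.1 ∧ s ∈ N (p.2 : X)} with hR
  have key : ∀ z : X, ∀ᶠ z' in nhds z, N z' ⊆ N z := by
    intro z
    obtain ⟨s₀, hs₀t, hs₀⟩ := hNmem z
    have hev : ∀ᶠ z' in nhds z, ∀ s ∈ t, s ∉ N z → s ∉ N z' := by
      rw [Finset.eventually_all]
      intro s hst
      by_cases hs : s ∈ N z
      · exact Filter.Eventually.of_forall fun z' h => absurd hs h
      · have hlt : dist z (s₀ : X) < dist z (s : X) := by
          rcases lt_or_ge (m z) (dist z (s : X)) with h | h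
          · exact lt_of_le_of_lt hs₀.2 h
          · exact absurd ⟨hst, h⟩ hs
        have hcont1 : ContinuousAt (fun z' : X => dist z' (s₀ : X)) z :=
          (continuous_id.dist continuous_const).continuousAt
        have hcont2 : ContinuousAt (fun z' : X => dist z' (s : X)) z :=
          (continuous_id.dist continuous_const).continuousAt
        filter_upwards [hcont1.eventually_lt hcont2 hlt] with z' hz' _ hmem
        exact absurd (hmem.2.trans (Finset.inf'_le _ hs₀.1)) (not_le.2 hz')
    filter_upwards [hev] with z' h s hsmem
    by_contra hns
    exact h s hsmem.1 hns hsmem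
  refine ⟨R, ⟨⟨?_, ?_⟩, ?_, ?_⟩, ?_⟩
  · intro x
    obtain ⟨s, hst, hsN⟩ := hNmem x
    exact ⟨s, s, hsN, hself s hst⟩
  · intro y
    obtain ⟨s, hst, hsN⟩ := hNmem (y : X)
    exact ⟨(s : X), s, hself s hst, hsN⟩
  · intro x U hU hsub
    obtain ⟨V, hVsub, hVopen, hxV⟩ := _root_.eventually_nhds_iff.1 (key x)
    refine ⟨V, hVopen, hxV, fun x' hx' y hy => ?_⟩
    obtain ⟨s, hs1, hs2⟩ := hy
    exact hsub ⟨s, hVsub x' hx' hs1, hs2⟩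
  · intro y U hU hsub
    obtain ⟨W, hWsub, hWopen, hyW⟩ := _root_.eventually_nhds_iff.1 (key (y : X))
    refine ⟨Subtype.val ⁻¹' W, hWopen.preimage continuous_subtype_val, hyW, fun y' hy' x hx => ?_⟩
    obtain ⟨s, hs1, hs2⟩ := hx
    exact hsub ⟨s, hs1, hWsub _ hy' hs2⟩
  · have hclose : ∀ p ∈ R, dist p.1 (p.2 : X) ≤ 2 * δ := by
      rintro p ⟨s, hs1, hs2⟩
      calc dist p.1 (p.2 : X) ≤ dist p.1 (s : X) + dist (s : X) (p.2 : X) :=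
            dist_triangle _ _ _
        _ ≤ m p.1 + m (p.2 : X) := by
            rw [dist_comm (s : X)]
            exact add_le_add hs1.2 hs2.2
        _ ≤ δ + δ := add_le_add (hmlt _).le (hmlt _).le
        _ = 2 * δ := by ring
    refine iSup₂_le fun p hp => iSup₂_le fun q hq => ENNReal.ofReal_le_ofReal ?_
    have h1 := hclose p hp
    have h2 := hclose q hq
    have hdy : dist p.2 q.2 = dist (p.2 : X) (q.2 : X) := Subtype.dist_eq _ _
    rw [hdy, ← Real.dist_eq]
    calc dist (dist p.1 q.1) (dist (p.2 : X) (q.2 : X))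
        ≤ dist p.1 (p.2 : X) + dist q.1 (q.2 : X) := dist_dist_dist_le _ _ _ _
      _ ≤ 4 * δ := by linarith

theorem stmt_17 {X : Type*} [MetricSpace X] [CompactSpace X] [Nonempty X]
    (Y : Set X) (hY : Dense Y) :
    dGHus X Y = 0 := by
  rw [dGHus]
  have h0 : (⨅ (R : Set (X × ↥Y))
      (_ : IsCorrespondence R ∧ SVUpperSemicontinuous (corrMap R) ∧
        SVUpperSemicontinuous (corrInv R)), dis R) = 0 := by
    refine le_antisymm ?_ zero_le
    refine ENNReal.le_of_forall_pos_le_add fun ε hε _ => ?_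
    rw [zero_add]
    have hδ : (0 : ℝ) < (ε : ℝ) / 8 := by
      have : (0 : ℝ) < (ε : ℝ) := by exact_mod_cast hε
      linarith
    obtain ⟨R, hRgood, hdis⟩ := exists_good_corr Y hY hδ
    refine le_trans (iInf₂_le R hRgood) (hdis.trans ?_)
    have h4 : (4 : ℝ) * ((ε : ℝ) / 8) = (ε : ℝ) / 2 := by ring
    rw [h4]
    calc ENNReal.ofReal ((ε : ℝ) / 2) ≤ ENNReal.ofReal (ε : ℝ) :=
          ENNReal.ofReal_le_ofReal (by linarith)
      _ = (ε : ℝ≥0∞) := ENNReal.ofReal_coe_nnreal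
  rw [h0, mul_zero]
end

section
/- Let X and Y be nonempty totally bounded metric spaces. Then d^{us}_GH(X,Y) = d_GH(X,Y). -/
open Metric Set
open scoped ENNReal

/-- A set-valued map given by a finite union of "products" with closed first factors
is upper semicontinuous. -/
lemma usc_aux {X Y : Type*} [TopologicalSpace X] [TopologicalSpace Y] {ι : Type*} [Finite ι]
    (A : ι → Set X) (B : ι → Set Y) (hA : ∀ i, IsClosed (A i)) :
    SVUpperSemicontinuous (fun x => {y | ∃ i, x ∈ A i ∧ y ∈ B i}) := by
  intro x U hU hsub
  refine ⟨⋂ i ∈ {i | x ∉ A i}, (A i)ᶜ, ?_, ?_, ?_⟩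
  · exact Set.Finite.isOpen_biInter (Set.toFinite _) fun i _ => (hA i).isOpen_compl
  · exact Set.mem_iInter₂.2 fun i hi => hi
  · intro x' hx' y hy
    obtain ⟨i, hxi, hyi⟩ := hy
    have hxA : x ∈ A i := by
      by_contra hmem
      exact (Set.mem_iInter₂.1 hx' i hmem) hxi
    exact hsub ⟨i, hxA, hyi⟩

theorem stmt_18 {X Y : Type*} [MetricSpace X] [MetricSpace Y] [Nonempty X] [Nonempty Y]
    (hX : TotallyBounded (Set.univ : Set X)) (hY : TotallyBounded (Set.univ : Set Y)) :
    dGHus X Y = dGH X Y := by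
  apply le_antisymm
  · -- hard direction: dGHus ≤ dGH
    apply ENNReal.le_of_forall_pos_le_add
    intro ε hε hfin
    -- the infimum over correspondences is finite
    set I : ℝ≥0∞ := ⨅ (R : Set (X × Y)) (_ : IsCorrespondence R), dis R with hI
    have hIfin : I < ⊤ := by
      by_contra h
      push_neg at h
      have : dGH X Y = ⊤ := by
        rw [dGH, ← hI, top_le_iff.1 h, ENNReal.mul_top (by norm_num)]
      exact absurd this (ne_of_lt hfin)
    -- pick a correspondence R with dis R < I + ε
    have hlt : (⨅ (R : Set (X × Y)) (_ : IsCorrespondence R), dis R) < I + ε := by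
      rw [← hI]
      exact ENNReal.lt_add_right hIfin.ne (by exact_mod_cast hε.ne')
    obtain ⟨R, hRlt⟩ := iInf_lt_iff.1 hlt
    obtain ⟨hR, hRlt⟩ := iInf_lt_iff.1 hRlt
    -- selection functions
    obtain ⟨φ, hφ⟩ := Classical.axiomOfChoice hR.1
    obtain ⟨ψ, hψ⟩ := Classical.axiomOfChoice hR.2
    -- finite nets of radius δ = ε/4
    set δ : ℝ := (ε : ℝ) / 4 with hδdef
    have hδ : 0 < δ := by positivity
    obtain ⟨s, hsfin, hscov⟩ := Metric.totallyBounded_iff.1 hX δ hδ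
    obtain ⟨t, htfin, htcov⟩ := Metric.totallyBounded_iff.1 hY δ hδ
    haveI := hsfin.to_subtype
    haveI := htfin.to_subtype
    -- the approximating correspondence
    set A : (↥s ⊕ ↥t) → Set X :=
      Sum.elim (fun a => closedBall (a : X) δ) (fun b => closedBall (ψ (b : Y)) δ) with hA
    set B : (↥s ⊕ ↥t) → Set Y :=
      Sum.elim (fun a => closedBall (φ (a : X)) δ) (fun b => closedBall (b : Y) δ) with hB
    set R' : Set (X × Y) := {p | ∃ i, p.1 ∈ A i ∧ p.2 ∈ B i} with hR'
    have hAclosed : ∀ i, IsClosed (A i) := by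
      rintro (a | b) <;> exact isClosed_closedBall
    have hBclosed : ∀ i, IsClosed (B i) := by
      rintro (a | b) <;> exact isClosed_closedBall
    -- R' is a correspondence
    have hcorr : IsCorrespondence R' := by
      constructor
      · intro x
        obtain ⟨a, ha, hxa⟩ := Set.mem_iUnion₂.1 (hscov (Set.mem_univ x))
        exact ⟨φ a, Sum.inl ⟨a, ha⟩, le_of_lt (Metric.mem_ball.1 hxa),
          Metric.mem_closedBall_self hδ.le⟩
      · intro y
        obtain ⟨b, hb, hyb⟩ := Set.mem_iUnion₂.1 (htcov (Set.mem_univ y))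
        exact ⟨ψ b, Sum.inr ⟨b, hb⟩, Metric.mem_closedBall_self hδ.le,
          le_of_lt (Metric.mem_ball.1 hyb)⟩
    -- R' is usc both ways
    have husc1 : SVUpperSemicontinuous (corrMap R') := by
      have : corrMap R' = fun x => {y | ∃ i, x ∈ A i ∧ y ∈ B i} := rfl
      rw [this]
      exact usc_aux A B hAclosed
    have husc2 : SVUpperSemicontinuous (corrInv R') := by
      have : corrInv R' = fun y => {x | ∃ i, y ∈ B i ∧ x ∈ A i} := by
        funext y; ext x
        exact ⟨fun ⟨i, h1, h2⟩ => ⟨i, h2, h1⟩, fun ⟨i, h1, h2⟩ => ⟨i, h2, h1⟩⟩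
      rw [this]
      exact usc_aux B A hBclosed
    -- every point of R' is δ-close to a point of R
    have hclose : ∀ p ∈ R', ∃ r ∈ R, dist p.1 r.1 ≤ δ ∧ dist p.2 r.2 ≤ δ := by
      rintro p ⟨(a | b), hp1, hp2⟩
      · exact ⟨((a : X), φ (a : X)), hφ (a : X),
          Metric.mem_closedBall.1 hp1, Metric.mem_closedBall.1 hp2⟩
      · exact ⟨(ψ (b : Y), (b : Y)), hψ (b : Y),
          Metric.mem_closedBall.1 hp1, Metric.mem_closedBall.1 hp2⟩
    -- distortion bound: dis R' ≤ dis R + 4δ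
    have hdis : dis R' ≤ dis R + ENNReal.ofReal (4 * δ) := by
      apply iSup₂_le; intro p hp; apply iSup₂_le; intro q hq
      obtain ⟨r, hr, hr1, hr2⟩ := hclose p hp
      obtain ⟨r', hr', hr'1, hr'2⟩ := hclose q hq
      have key : |dist p.1 q.1 - dist p.2 q.2| ≤
          |dist r.1 r'.1 - dist r.2 r'.2| + 4 * δ := by
        have h1 : |dist p.1 q.1 - dist r.1 r'.1| ≤ dist p.1 r.1 + dist q.1 r'.1 :=
          dist_dist_dist_le p.1 q.1 r.1 r'.1
        have h2 : |dist r.2 r'.2 - dist p.2 q.2| ≤ dist r.2 p.2 + dist r'.2 q.2 :=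
          dist_dist_dist_le r.2 r'.2 p.2 q.2
        have h3 : |dist p.1 q.1 - dist p.2 q.2| ≤
            |dist p.1 q.1 - dist r.1 r'.1| + |dist r.1 r'.1 - dist r.2 r'.2| +
              |dist r.2 r'.2 - dist p.2 q.2| := by
          have := abs_sub_le (dist p.1 q.1) (dist r.1 r'.1) (dist p.2 q.2)
          have := abs_sub_le (dist r.1 r'.1) (dist r.2 r'.2) (dist p.2 q.2)
          linarith [abs_sub_le (dist p.1 q.1) (dist r.1 r'.1) (dist p.2 q.2),
            abs_sub_le (dist r.1 r'.1) (dist r.2 r'.2) (dist p.2 q.2)]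
        have hd1 : dist r.2 p.2 = dist p.2 r.2 := dist_comm _ _
        have hd2 : dist r'.2 q.2 = dist q.2 r'.2 := dist_comm _ _
        linarith [hr1, hr2, hr'1, hr'2]
      calc ENNReal.ofReal |dist p.1 q.1 - dist p.2 q.2|
          ≤ ENNReal.ofReal (|dist r.1 r'.1 - dist r.2 r'.2| + 4 * δ) :=
            ENNReal.ofReal_le_ofReal key
        _ ≤ ENNReal.ofReal |dist r.1 r'.1 - dist r.2 r'.2| + ENNReal.ofReal (4 * δ) :=
            ENNReal.ofReal_add_le
        _ ≤ dis R + ENNReal.ofReal (4 * δ) := by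
            gcongr
            exact le_iSup₂_of_le r hr (le_iSup₂_of_le r' hr' le_rfl)
    -- put it together
    have h4δ : ENNReal.ofReal (4 * δ) = (ε : ℝ≥0∞) := by
      rw [hδdef]
      rw [show (4 : ℝ) * ((ε : ℝ) / 4) = (ε : ℝ) by ring]
      exact ENNReal.ofReal_coe_nnreal
    have hstep : dGHus X Y ≤ 2⁻¹ * (I + ε + ε) := by
      rw [dGHus]
      have hle : (⨅ (S : Set (X × Y))
          (_ : IsCorrespondence S ∧ SVUpperSemicontinuous (corrMap S) ∧
            SVUpperSemicontinuous (corrInv S)), dis S) ≤ dis R' :=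
        iInf₂_le R' ⟨hcorr, husc1, husc2⟩
      have : dis R' ≤ I + ε + ε := by
        calc dis R' ≤ dis R + ENNReal.ofReal (4 * δ) := hdis
          _ = dis R + ε := by rw [h4δ]
          _ ≤ I + ε + ε := add_le_add_left hRlt.le _
      exact mul_le_mul_right (hle.trans this) _
    calc dGHus X Y ≤ 2⁻¹ * (I + ε + ε) := hstep
      _ = 2⁻¹ * I + 2⁻¹ * (2 * ε) := by ring_nf
      _ = dGH X Y + ε := by
          rw [dGH, ← hI, ← mul_assoc,
            ENNReal.inv_mul_cancel (by norm_num) (by norm_num), one_mul]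
  · -- easy direction: dGH ≤ dGHus
    rw [dGH, dGHus]
    apply mul_le_mul_right
    exact le_iInf₂ fun R hR => iInf₂_le R hR.1
end

section
/- Let X and Y be nonempty boundedly compact metric spaces (every closed ball is compact) with d_GH(X,Y) < ∞. Then d^{us}_GH(X,Y) = d_GH(X,Y). -/
open Metric Set
open scoped ENNReal

section Aux

variable {X Y : Type*} [MetricSpace X] [MetricSpace Y]

lemma dis_pair_le {σ : Set (X × Y)} {p q : X × Y} (hp : p ∈ σ) (hq : q ∈ σ) :
    ENNReal.ofReal |dist p.1 q.1 - dist p.2 q.2| ≤ dis σ := by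
  have h1 := le_iSup₂ (f := fun (q : X × Y) (_ : q ∈ σ) =>
    ENNReal.ofReal |dist p.1 q.1 - dist p.2 q.2|) q hq
  exact h1.trans (le_iSup₂ (f := fun (p : X × Y) (_ : p ∈ σ) =>
    ⨆ (q ∈ σ), ENNReal.ofReal |dist p.1 q.1 - dist p.2 q.2|) p hp)

lemma dis_closure {σ : Set (X × Y)} (h : dis σ ≠ ⊤) :
    ∀ p ∈ closure σ, ∀ q ∈ closure σ,
      |dist p.1 q.1 - dist p.2 q.2| ≤ (dis σ).toReal := by
  set D := (dis σ).toReal with hD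
  have hb : ∀ p ∈ σ, ∀ q ∈ σ, |dist p.1 q.1 - dist p.2 q.2| ≤ D := by
    intro p hp q hq
    have h1 := ENNReal.toReal_mono h (dis_pair_le hp hq)
    rwa [ENNReal.toReal_ofReal (abs_nonneg _)] at h1
  set S : Set ((X × Y) × (X × Y)) :=
    {pq | |dist pq.1.1 pq.2.1 - dist pq.1.2 pq.2.2| ≤ D} with hS
  have hcont : Continuous fun pq : (X × Y) × (X × Y) =>
      |dist pq.1.1 pq.2.1 - dist pq.1.2 pq.2.2| := by fun_prop
  have hclosed : IsClosed S := isClosed_le hcont continuous_const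
  have hsub : σ ×ˢ σ ⊆ S := fun pq hpq => hb _ hpq.1 _ hpq.2
  have hcl : closure σ ×ˢ closure σ ⊆ S := by
    rw [← closure_prod_eq]
    exact hclosed.closure_subset_iff.mpr hsub
  intro p hp q hq
  exact hcl (show (p, q) ∈ closure σ ×ˢ closure σ from ⟨hp, hq⟩)

lemma dis_closure_le {σ : Set (X × Y)} : dis (closure σ) ≤ dis σ := by
  rcases eq_or_ne (dis σ) ⊤ with h | h
  · simp [h]
  · refine iSup₂_le fun p hp => iSup₂_le fun q hq => ?_
    have := dis_closure h p hp q hq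
    calc ENNReal.ofReal |dist p.1 q.1 - dist p.2 q.2|
        ≤ ENNReal.ofReal (dis σ).toReal := ENNReal.ofReal_le_ofReal this
      _ = dis σ := ENNReal.ofReal_toReal h

/-- A closed relation whose slices are locally contained in compact sets is
upper semicontinuous. -/
lemma usc_of_closed {C : Set (X × Y)} (hC : IsClosed C)
    (hb : ∀ x : X, ∃ K : Set Y, IsCompact K ∧ ∃ V : Set X, IsOpen V ∧ x ∈ V ∧
      ∀ x' ∈ V, corrMap C x' ⊆ K) :
    SVUpperSemicontinuous (corrMap C) := by
  intro x U hU hsub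
  obtain ⟨K, hK, V0, hV0, hxV0, hV0K⟩ := hb x
  have hT : IsCompact (K \ U) := hK.diff hU
  have hsub' : ({x} : Set X) ×ˢ (K \ U) ⊆ Cᶜ := by
    rintro ⟨x', y⟩ ⟨hx', hy⟩
    simp only [mem_singleton_iff] at hx'
    subst hx'
    intro hmem
    exact hy.2 (hsub hmem)
  obtain ⟨u, v, hu, hv, hxu, hTv, huv⟩ :=
    generalized_tube_lemma isCompact_singleton hT hC.isOpen_compl hsub'
  refine ⟨u ∩ V0, hu.inter hV0, ⟨hxu rfl, hxV0⟩, ?_⟩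
  rintro x' ⟨hx'u, hx'V0⟩ y hy
  have hyK : y ∈ K := hV0K x' hx'V0 hy
  by_contra hyU
  exact huv (⟨hx'u, hTv ⟨hyK, hyU⟩⟩ : (x', y) ∈ u ×ˢ v) hy

end Aux

theorem stmt_19 {X Y : Type*} [MetricSpace X] [MetricSpace Y] [Nonempty X] [Nonempty Y]
    (hX : ∀ (x : X) (r : ℝ), IsCompact (Metric.closedBall x r))
    (hY : ∀ (y : Y) (r : ℝ), IsCompact (Metric.closedBall y r))
    (hfin : dGH X Y < ⊤) :
    dGHus X Y = dGH X Y := by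
  refine le_antisymm ?_ ?_
  · -- dGHus ≤ dGH
    refine mul_le_mul_right (le_iInf₂ fun R hR => ?_) _
    rcases eq_or_ne (dis R) ⊤ with hRtop | hRtop
    · exact hRtop ▸ le_top
    -- work with the closure of R
    set C := closure R with hCdef
    have hCclosed : IsClosed C := isClosed_closure
    have hRC : R ⊆ C := subset_closure
    have hCcorr : IsCorrespondence C :=
      ⟨fun x => (hR.1 x).imp fun y hy => hRC hy,
       fun y => (hR.2 y).imp fun x hx => hRC hx⟩
    obtain ⟨x0, y0, hxy0⟩ : ∃ x0 y0, (x0, y0) ∈ C := by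
      obtain ⟨y0, hy0⟩ := hCcorr.1 (Classical.arbitrary X)
      exact ⟨_, _, hy0⟩
    set D := (dis R).toReal with hDdef
    have hbound := dis_closure hRtop
    -- usc of corrMap C
    have husM : SVUpperSemicontinuous (corrMap C) := by
      refine usc_of_closed hCclosed fun x => ?_
      refine ⟨closedBall y0 (dist x x0 + 1 + D), hY _ _, ball x 1,
        isOpen_ball, mem_ball_self one_pos, ?_⟩
      intro x' hx' y hy
      have h1 : |dist x' x0 - dist y y0| ≤ D := hbound (x', y) hy (x0, y0) hxy0
      have h2 : dist y y0 ≤ dist x' x0 + D := by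
        have := abs_le.mp h1
        linarith [this.1]
      have h3 : dist x' x0 ≤ dist x x0 + 1 := by
        have := dist_triangle x' x x0
        have hx'1 : dist x' x < 1 := mem_ball.mp hx'
        linarith
      exact mem_closedBall.mpr (by linarith)
    -- usc of corrInv C
    have husI : SVUpperSemicontinuous (corrInv C) := by
      have hC' : IsClosed (Prod.swap ⁻¹' C : Set (Y × X)) :=
        hCclosed.preimage continuous_swap
      have heq : corrInv C = corrMap (Prod.swap ⁻¹' C : Set (Y × X)) := rfl
      rw [heq]
      refine usc_of_closed hC' fun y => ?_
      refine ⟨closedBall x0 (dist y y0 + 1 + D), hX _ _, ball y 1,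
        isOpen_ball, mem_ball_self one_pos, ?_⟩
      intro y' hy' x hx
      have hxC : (x, y') ∈ C := hx
      have h1 : |dist x x0 - dist y' y0| ≤ D := hbound (x, y') hxC (x0, y0) hxy0
      have h2 : dist x x0 ≤ dist y' y0 + D := by
        have := abs_le.mp h1
        linarith [this.2]
      have h3 : dist y' y0 ≤ dist y y0 + 1 := by
        have := dist_triangle y' y y0
        have hy'1 : dist y' y < 1 := mem_ball.mp hy'
        linarith
      exact mem_closedBall.mpr (by linarith)
    calc (⨅ (S : Set (X × Y))
          (_ : IsCorrespondence S ∧ SVUpperSemicontinuous (corrMap S) ∧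
            SVUpperSemicontinuous (corrInv S)), dis S)
        ≤ dis C := iInf₂_le C ⟨hCcorr, husM, husI⟩
      _ ≤ dis R := dis_closure_le
  · -- dGH ≤ dGHus
    exact mul_le_mul_right (le_iInf₂ fun R hR => iInf₂_le R hR.1) _
end
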